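/- Fix integers n ≥ 1 and 0 < v_1 < v_2 < ⋯ < v_n < v_{n+1} = N. Let d be a degree vector that is aligned and not identically zero. Then D(d) < −1. -/

import Mathlib

open Finset

/-- `Bb m = m(m+1)/2` for `m ≥ 0` and `Bb m = 0` for `m < 0`. -/
def Bb (m : ℤ) : ℤ := if 0 ≤ m then m * (m + 1) / 2 else 0

lemma Bb_nonneg (m : ℤ) : 0 ≤ Bb m := by
  unfold Bb
  split_ifs with h
  · exact Int.ediv_nonneg (by nlinarith) (by norm_num)
  · exact le_refl 0

lemma Bb_mono {a b : ℤ} (h : a ≤ b) : Bb a ≤ Bb b := by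
  unfold Bb
  split_ifs with h1 h2
  · exact Int.ediv_le_ediv (by norm_num) (by nlinarith)
  · exact absurd (h1.trans h) h2
  · exact Int.ediv_nonneg (by nlinarith) (by norm_num)
  · exact le_refl 0

lemma Bb_one_le {m : ℤ} (h : 1 ≤ m) : 1 ≤ Bb m := by
  have h1 : Bb 1 ≤ Bb m := Bb_mono h
  have : Bb 1 = 1 := by norm_num [Bb]
  omega

/-- Nonpositivity of each level's contribution, via the alignment injection. -/
lemma term_nonpos (vi vi1 : ℕ) (a b : ℕ → ℕ) (f : ℕ → ℕ)
    (hinj : Set.InjOn f (Set.Icc 1 vi))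
    (hf : ∀ j, 1 ≤ j → j ≤ vi → 1 ≤ f j ∧ f j ≤ vi1 ∧ b (f j) ≤ a j) :
    (∑ j ∈ Icc 1 vi, ∑ k ∈ Icc 1 vi, Bb ((a j : ℤ) - (a k : ℤ)))
      ≤ ∑ j ∈ Icc 1 vi, ∑ r ∈ Icc 1 vi1, Bb ((a j : ℤ) - (b r : ℤ)) := by
  refine sum_le_sum fun j _ => ?_
  have h1 : ∑ k ∈ Icc 1 vi, Bb ((a j : ℤ) - (a k : ℤ))
      ≤ ∑ k ∈ Icc 1 vi, Bb ((a j : ℤ) - (b (f k) : ℤ)) := by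
    refine sum_le_sum fun k hk => ?_
    rw [mem_Icc] at hk
    have h := (hf k hk.1 hk.2).2.2
    apply Bb_mono
    have : (b (f k) : ℤ) ≤ (a k : ℤ) := by exact_mod_cast h
    linarith
  have h2 : ∑ k ∈ Icc 1 vi, Bb ((a j : ℤ) - (b (f k) : ℤ))
      = ∑ r ∈ (Icc 1 vi).image f, Bb ((a j : ℤ) - (b r : ℤ)) := by
    refine (Finset.sum_image (s := Icc 1 vi) (g := f)
      (f := fun r => Bb ((a j : ℤ) - (b r : ℤ))) fun x hx y hy hxy => ?_).symm
    rw [Finset.mem_coe, mem_Icc] at hx hy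
    exact hinj (Set.mem_Icc.mpr hx) (Set.mem_Icc.mpr hy) hxy
  have h3 : (Icc 1 vi).image f ⊆ Icc 1 vi1 := by
    intro r hr
    rw [mem_image] at hr
    obtain ⟨k, hk, rfl⟩ := hr
    rw [mem_Icc] at hk
    exact mem_Icc.mpr ⟨(hf k hk.1 hk.2).1, (hf k hk.1 hk.2).2.1⟩
  calc ∑ k ∈ Icc 1 vi, Bb ((a j : ℤ) - (a k : ℤ))
      ≤ ∑ r ∈ (Icc 1 vi).image f, Bb ((a j : ℤ) - (b r : ℤ)) := h2 ▸ h1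
    _ ≤ ∑ r ∈ Icc 1 vi1, Bb ((a j : ℤ) - (b r : ℤ)) :=
        sum_le_sum_of_subset_of_nonneg h3 fun _ _ _ => Bb_nonneg _

/-- Strict bound at the top nonzero level, where the next level vanishes. -/
lemma term_le_neg_two (vi vi1 : ℕ) (a b : ℕ → ℕ)
    (hv : vi < vi1) (hb : ∀ r ∈ Icc 1 vi1, b r = 0)
    (j0 : ℕ) (hj0 : j0 ∈ Icc 1 vi) (ha : a j0 ≠ 0) :
    (∑ j ∈ Icc 1 vi, ∑ k ∈ Icc 1 vi, Bb ((a j : ℤ) - (a k : ℤ)))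
      - ∑ j ∈ Icc 1 vi, ∑ r ∈ Icc 1 vi1, Bb ((a j : ℤ) - (b r : ℤ)) ≤ -2 := by
  have hvi1 : 1 ≤ vi := le_trans (mem_Icc.mp hj0).1 (mem_Icc.mp hj0).2
  set Sd : ℤ := ∑ j ∈ Icc 1 vi, Bb ((a j : ℤ)) with hSd
  have hC : ∑ j ∈ Icc 1 vi, ∑ r ∈ Icc 1 vi1, Bb ((a j : ℤ) - (b r : ℤ))
      = (vi1 : ℤ) * Sd := by
    rw [hSd, mul_sum]
    refine sum_congr rfl fun j _ => ?_
    have : ∀ r ∈ Icc 1 vi1, Bb ((a j : ℤ) - (b r : ℤ)) = Bb ((a j : ℤ)) := by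
      intro r hr
      rw [hb r hr]
      norm_num
    rw [sum_congr rfl this, sum_const, Nat.card_Icc]
    simp [nsmul_eq_mul, mul_comm]
  have hA : ∑ j ∈ Icc 1 vi, ∑ k ∈ Icc 1 vi, Bb ((a j : ℤ) - (a k : ℤ))
      ≤ ((vi : ℤ) - 1) * Sd := by
    rw [hSd, mul_sum]
    refine sum_le_sum fun j hj => ?_
    have hstep : ∀ k ∈ (Icc 1 vi).erase j, Bb ((a j : ℤ) - (a k : ℤ)) ≤ Bb ((a j : ℤ)) := by
      intro k _
      apply Bb_mono
      have : (0 : ℤ) ≤ (a k : ℤ) := Int.natCast_nonneg _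
      linarith
    have herase : ∑ k ∈ (Icc 1 vi).erase j, Bb ((a j : ℤ) - (a k : ℤ))
        ≤ ((Icc 1 vi).erase j).card • Bb ((a j : ℤ)) :=
      sum_le_card_nsmul _ _ _ hstep
    have hcard : ((Icc 1 vi).erase j).card = vi - 1 := by
      rw [card_erase_of_mem hj, Nat.card_Icc]
      omega
    have hself : Bb ((a j : ℤ) - (a j : ℤ)) = 0 := by norm_num [Bb]
    have hsplit : ∑ k ∈ Icc 1 vi, Bb ((a j : ℤ) - (a k : ℤ))
        = ∑ k ∈ (Icc 1 vi).erase j, Bb ((a j : ℤ) - (a k : ℤ)) := by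
      rw [← Finset.sum_erase_add _ _ hj, hself, add_zero]
    rw [hsplit]
    calc ∑ k ∈ (Icc 1 vi).erase j, Bb ((a j : ℤ) - (a k : ℤ))
        ≤ ((Icc 1 vi).erase j).card • Bb ((a j : ℤ)) := herase
      _ = ((vi - 1 : ℕ) : ℤ) * Bb ((a j : ℤ)) := by rw [hcard, nsmul_eq_mul]
      _ = ((vi : ℤ) - 1) * Bb ((a j : ℤ)) := by
          rw [Nat.cast_sub hvi1]; norm_num
  have hSd1 : 1 ≤ Sd := by
    have h1 : Bb ((a j0 : ℤ)) ≤ Sd :=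
      single_le_sum (fun i _ => Bb_nonneg _) hj0
    have h2 : 1 ≤ Bb ((a j0 : ℤ)) := by
      apply Bb_one_le
      exact_mod_cast Nat.one_le_iff_ne_zero.mpr ha
    omega
  have hvv : (vi : ℤ) + 1 ≤ (vi1 : ℤ) := by exact_mod_cast hv
  nlinarith [hA, hC, hSd1, hvv]

/-- The degree `D(d)` of the coefficient `J_d` of the twisted small `J`-function of
the abelianization of `Fl(v_1,…,v_n; N)`:
`D(d) = Σ_{i=1}^{n} ( Σ_{1≤j,k≤v_i} B(d^i_j − d^i_k)
        − Σ_{1≤j≤v_i} Σ_{1≤r≤v_{i+1}} B(d^i_j − d^{i+1}_r) )`. -/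
def degD (n : ℕ) (v : ℕ → ℕ) (d : ℕ → ℕ → ℕ) : ℤ :=
  ∑ i ∈ Icc 1 n,
    ((∑ j ∈ Icc 1 (v i), ∑ k ∈ Icc 1 (v i), Bb ((d i j : ℤ) - (d i k : ℤ)))
      - ∑ j ∈ Icc 1 (v i), ∑ r ∈ Icc 1 (v (i + 1)),
          Bb ((d i j : ℤ) - (d (i + 1) r : ℤ)))

/-- A degree vector `d` is aligned if for every `1 ≤ i ≤ n` there is an injection
`f_i : {1,…,v_i} → {1,…,v_{i+1}}` with `d^i_j ≥ d^{i+1}_{f_i(j)}` for all `j`. -/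
def Aligned (n : ℕ) (v : ℕ → ℕ) (d : ℕ → ℕ → ℕ) : Prop :=
  ∀ i, 1 ≤ i → i ≤ n → ∃ f : ℕ → ℕ,
    Set.InjOn f (Set.Icc 1 (v i)) ∧
    ∀ j, 1 ≤ j → j ≤ v i → 1 ≤ f j ∧ f j ≤ v (i + 1) ∧ d (i + 1) (f j) ≤ d i j

/-- For an aligned, not identically zero degree vector `d`, the `q`-degree of the
`J`-function coefficient satisfies `D(d) < −1`. -/
theorem degD_lt_neg_one (n : ℕ) (hn : 1 ≤ n) (v : ℕ → ℕ) (d : ℕ → ℕ → ℕ)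
    (hv1 : 0 < v 1) (hvmono : ∀ i, 1 ≤ i → i ≤ n → v i < v (i + 1))
    (hdtop : ∀ r, d (n + 1) r = 0)
    (halign : Aligned n v d)
    (hne : ∃ i j, 1 ≤ i ∧ i ≤ n ∧ 1 ≤ j ∧ j ≤ v i ∧ d i j ≠ 0) :
    degD n v d < -1 := by
  -- the set of levels with a nonzero entry (decidable predicate via positivity of sum)
  set S : Finset ℕ := (Icc 1 n).filter (fun i => 0 < ∑ j ∈ Icc 1 (v i), d i j) with hSdef
  have hSne : S.Nonempty := by
    obtain ⟨i, j, hi1, hin, hj1, hjv, hd⟩ := hne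
    refine ⟨i, mem_filter.mpr ⟨mem_Icc.mpr ⟨hi1, hin⟩, ?_⟩⟩
    have h2 : d i j ≤ ∑ j ∈ Icc 1 (v i), d i j :=
      single_le_sum (fun _ _ => Nat.zero_le _) (mem_Icc.mpr ⟨hj1, hjv⟩)
    omega
  set i0 : ℕ := S.max' hSne with hi0def
  have hi0S : i0 ∈ S := S.max'_mem hSne
  have hi0Icc : i0 ∈ Icc 1 n := (mem_filter.mp hi0S).1
  have hi0pos : 0 < ∑ j ∈ Icc 1 (v i0), d i0 j := (mem_filter.mp hi0S).2
  obtain ⟨j0, hj0, hdj0⟩ :=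
    Finset.exists_ne_zero_of_sum_ne_zero (Nat.pos_iff_ne_zero.mp hi0pos)
  have hi01 : 1 ≤ i0 := (mem_Icc.mp hi0Icc).1
  have hi0n : i0 ≤ n := (mem_Icc.mp hi0Icc).2
  -- the next level vanishes
  have hzero : ∀ r ∈ Icc 1 (v (i0 + 1)), d (i0 + 1) r = 0 := by
    intro r hr
    by_cases hcase : i0 = n
    · rw [hcase]; exact hdtop r
    · by_contra hdr
      have hmem : i0 + 1 ∈ S := by
        refine mem_filter.mpr ⟨mem_Icc.mpr ⟨by omega, by omega⟩, ?_⟩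
        have h2 : d (i0 + 1) r ≤ ∑ j ∈ Icc 1 (v (i0 + 1)), d (i0 + 1) j :=
          single_le_sum (fun _ _ => Nat.zero_le _) hr
        omega
      have := S.le_max' _ hmem
      omega
  -- bound each term
  have hbound : ∀ i ∈ Icc 1 n,
      ((∑ j ∈ Icc 1 (v i), ∑ k ∈ Icc 1 (v i), Bb ((d i j : ℤ) - (d i k : ℤ)))
        - ∑ j ∈ Icc 1 (v i), ∑ r ∈ Icc 1 (v (i + 1)),
            Bb ((d i j : ℤ) - (d (i + 1) r : ℤ)))
      ≤ (if i = i0 then (-2 : ℤ) else 0) := by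
    intro i hi
    rw [mem_Icc] at hi
    by_cases hii : i = i0
    · subst hii
      rw [if_pos rfl]
      exact term_le_neg_two (v i0) (v (i0 + 1)) (d i0) (d (i0 + 1))
        (hvmono i0 hi.1 hi.2) hzero j0 hj0 hdj0
    · rw [if_neg hii]
      obtain ⟨f, hinj, hf⟩ := halign i hi.1 hi.2
      have := term_nonpos (v i) (v (i + 1)) (d i) (d (i + 1)) f hinj hf
      linarith
  have hsum : degD n v d ≤ ∑ i ∈ Icc 1 n, (if i = i0 then (-2 : ℤ) else 0) :=
    sum_le_sum hbound
  have heval : ∑ i ∈ Icc 1 n, (if i = i0 then (-2 : ℤ) else 0) = -2 := by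
    rw [Finset.sum_ite_eq' (Icc 1 n) i0 (fun _ => (-2 : ℤ)), if_pos hi0Icc]
  omega
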